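/- Let B ∈ ℝ^{n×k} be Gale dual to A and D ∈ ℝ^{n×(k+1)} Gale dual to C with rows P_i, and define p_i(y) = ⟨P_i, (1,y)⟩ for y ∈ ℝ^k and g_j(y) = ∏_{b_{ij}>0} p_i(y)^{b_{ij}} − ∏_{b_{ij}<0} p_i(y)^{−b_{ij}}. Let F_i be a facet of Δ_P supported on {p_i = 0} and x a point in the relative interior of F_i. If b_{ij} ≠ 0 then sign(g_j(x)) = −sign(b_{ij}). -/
import Mathlib


/-- The affine forms `p_i(y) = ⟨P_i, (1,y)⟩` cut out by the rows of the Gale dual `D`. -/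
noncomputable def galeP (n k : ℕ) (D : Matrix (Fin n) (Fin (k + 1)) ℝ)
    (i : Fin n) (y : Fin k → ℝ) : ℝ :=
  D.mulVec (Fin.cons 1 y) i

/-- The Gale polynomial map
`g_j(y) = ∏_{b_{ij}>0} p_i(y)^{b_{ij}} − ∏_{b_{ij}<0} p_i(y)^{−b_{ij}}`. -/
noncomputable def galeG (n k : ℕ) (B : Matrix (Fin n) (Fin k) ℝ)
    (D : Matrix (Fin n) (Fin (k + 1)) ℝ) (j : Fin k) (y : Fin k → ℝ) : ℝ :=
  (∏ i ∈ Finset.univ.filter (fun i => 0 < B i j), galeP n k D i y ^ B i j) -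
    ∏ i ∈ Finset.univ.filter (fun i => B i j < 0), galeP n k D i y ^ (-(B i j))

/-- Lemma on the sign of `g` on facets, part (1): if `x` lies in the
relative interior of the facet `F_i` of `Δ_P` (so `p_i(x) = 0` and `p_ℓ(x) > 0` for
`ℓ ≠ i`) and `b_{ij} ≠ 0`, then `sign(g_j(x)) = −sign(b_{ij})`. -/
theorem sign_of_g_on_facet
    (n k : ℕ) (B : Matrix (Fin n) (Fin k) ℝ) (D : Matrix (Fin n) (Fin (k + 1)) ℝ)
    (i : Fin n) (j : Fin k) (x : Fin k → ℝ)
    (hzero : galeP n k D i x = 0)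
    (hpos : ∀ l, l ≠ i → 0 < galeP n k D l x)
    (hb : B i j ≠ 0) :
    Real.sign (galeG n k B D j x) = -Real.sign (B i j) := by
  unfold galeG
  rcases lt_or_gt_of_ne hb with hneg | hposb
  · -- B i j < 0 : first product positive, second product zero
    have h1 : (0:ℝ) < ∏ l ∈ Finset.univ.filter (fun l => 0 < B l j),
        galeP n k D l x ^ B l j := by
      apply Finset.prod_pos
      intro l hl
      simp only [Finset.mem_filter] at hl
      have hli : l ≠ i := by rintro rfl; exact absurd hl.2 (not_lt.mpr hneg.le)
      exact Real.rpow_pos_of_pos (hpos l hli) _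
    have h2 : (∏ l ∈ Finset.univ.filter (fun l => B l j < 0),
        galeP n k D l x ^ (-(B l j))) = 0 := by
      apply Finset.prod_eq_zero (i := i)
      · simp [hneg]
      · rw [hzero, Real.zero_rpow (by linarith)]
    rw [h2, sub_zero, Real.sign_of_pos h1, Real.sign_of_neg hneg]
    norm_num
  · -- 0 < B i j : first product zero, second positive
    have h1 : (∏ l ∈ Finset.univ.filter (fun l => 0 < B l j),
        galeP n k D l x ^ B l j) = 0 := by
      apply Finset.prod_eq_zero (i := i)
      · simp [hposb]
      · rw [hzero, Real.zero_rpow hb]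
    have h2 : (0:ℝ) < ∏ l ∈ Finset.univ.filter (fun l => B l j < 0),
        galeP n k D l x ^ (-(B l j)) := by
      apply Finset.prod_pos
      intro l hl
      simp only [Finset.mem_filter] at hl
      have hli : l ≠ i := by rintro rfl; exact absurd hl.2 (not_lt.mpr hposb.le)
      exact Real.rpow_pos_of_pos (hpos l hli) _
    rw [h1, zero_sub, Real.sign_of_neg (neg_neg_iff_pos.mpr h2), Real.sign_of_pos hposb]
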